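/- Let (ϑ₁,…,ϑ_N) ∈ (0,1)^N and let q ∈ [0, ∑_{l=1}^N 1/ϑ_l). Let τ ∈ {1,…,N} be the unique integer with ∑_{l=1}^{τ−1} 1/ϑ_l ≤ q < ∑_{l=1}^τ 1/ϑ_l (with the convention that the empty sum equals 0). Then there exists Δ_τ ∈ (0,1], depending only on (ϑ₁,…,ϑ_N), such that for every Δ ∈ (0,Δ_τ) there exist real numbers p₁,…,p_τ ≥ 1 satisfying: (i) ∑_{l=1}^τ 1/p_l = 1; (ii) ϑ_l·q/p_l < 1 for all l = 1,…,τ; (iii) (1−Δ)·∑_{l=1}^τ ϑ_l·q/p_l ≤ ϑ_τ·q + τ − ∑_{l=1}^τ ϑ_τ/ϑ_l; and moreover, setting α_τ := ∑_{l=1}^τ 1/ϑ_l − q, for every κ ∈ (0, α_τ/(2τ)) there exists l₀ ∈ {1,…,τ} such that ϑ_{l₀}·(q/p_{l₀} + 2κ) < 1. -/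

import Mathlib

open Finset

set_option maxHeartbeats 1000000 in
/-- Lemma 3.3: existence of Hölder exponents `p₁,…,p_τ` used in the generalized
Hölder inequality arguments for moments of local times. -/
theorem holder_exponents_exist (N : ℕ) (hN : 1 ≤ N) (ϑ : ℕ → ℝ)
    (hϑ : ∀ l ∈ Finset.Icc 1 N, 0 < ϑ l ∧ ϑ l < 1)
    (q : ℝ) (hq0 : 0 ≤ q) (hqN : q < ∑ l ∈ Finset.Icc 1 N, 1 / ϑ l)
    (τ : ℕ) (hτ1 : 1 ≤ τ) (hτN : τ ≤ N)
    (hlow : ∑ l ∈ Finset.Icc 1 (τ - 1), 1 / ϑ l ≤ q)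
    (hhigh : q < ∑ l ∈ Finset.Icc 1 τ, 1 / ϑ l) :
    ∃ Δτ : ℝ, 0 < Δτ ∧ Δτ ≤ 1 ∧
      ∀ Δ : ℝ, 0 < Δ → Δ < Δτ →
        ∃ p : ℕ → ℝ,
          (∀ l ∈ Finset.Icc 1 τ, 1 ≤ p l) ∧
          (∑ l ∈ Finset.Icc 1 τ, 1 / p l = 1) ∧
          (∀ l ∈ Finset.Icc 1 τ, ϑ l * q / p l < 1) ∧
          ((1 - Δ) * ∑ l ∈ Finset.Icc 1 τ, ϑ l * q / p l ≤
            ϑ τ * q + τ - ∑ l ∈ Finset.Icc 1 τ, ϑ τ / ϑ l) ∧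
          (∀ κ : ℝ, 0 < κ →
            κ < (∑ l ∈ Finset.Icc 1 τ, 1 / ϑ l - q) / (2 * τ) →
            ∃ l₀ ∈ Finset.Icc 1 τ, ϑ l₀ * (q / p l₀ + 2 * κ) < 1) := by
  have hτmem : τ ∈ Finset.Icc 1 τ := Finset.mem_Icc.2 ⟨hτ1, le_refl τ⟩
  have hϑτ : 0 < ϑ τ ∧ ϑ τ < 1 := hϑ τ (Finset.mem_Icc.2 ⟨hτ1, hτN⟩)
  have hϑpos : ∀ l ∈ Finset.Icc 1 τ, 0 < ϑ l := fun l hl => by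
    have := Finset.mem_Icc.1 hl
    exact (hϑ l (Finset.mem_Icc.2 ⟨this.1, this.2.trans hτN⟩)).1
  rcases eq_or_lt_of_le hτ1 with hτeq | hτ2
  · -- case τ = 1
    subst hτeq
    simp only [Finset.Icc_self, Finset.sum_singleton, Finset.mem_singleton] at hhigh hϑτ ⊢
    refine ⟨1, one_pos, le_refl 1, fun Δ hΔ0 hΔ1 => ⟨fun _ => 1, ?_, ?_, ?_, ?_, ?_⟩⟩
    · intro l _; exact le_refl 1
    · simp
    · intro l hl
      subst hl
      rw [div_one]
      rcases eq_or_lt_of_le hq0 with h | h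
      · rw [← h, mul_zero]
        norm_num
      · calc ϑ 1 * q < ϑ 1 * (1 / ϑ 1) := mul_lt_mul_of_pos_left hhigh hϑτ.1
          _ = 1 := by rw [mul_one_div, div_self (ne_of_gt hϑτ.1)]
    · have h1 : ϑ 1 / ϑ 1 = 1 := div_self (ne_of_gt hϑτ.1)
      rw [h1, div_one]
      push_cast
      nlinarith [mul_nonneg hϑτ.1.le hq0]
    · intro κ hκ0 hκlt
      refine ⟨1, rfl, ?_⟩
      push_cast at hκlt
      rw [div_one]
      have h2 : 2 * κ < 1 / ϑ 1 - q := by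
        rw [lt_div_iff₀ (by norm_num : (0:ℝ) < 2 * 1)] at hκlt
        linarith
      have h3 : q + 2 * κ < 1 / ϑ 1 := by linarith
      calc ϑ 1 * (q + 2 * κ) < ϑ 1 * (1 / ϑ 1) := mul_lt_mul_of_pos_left h3 hϑτ.1
        _ = 1 := by rw [mul_one_div, div_self (ne_of_gt hϑτ.1)]
  · -- case τ ≥ 2
    obtain ⟨n, rfl⟩ : ∃ n, τ = n + 1 := ⟨τ - 1, (Nat.succ_pred_eq_of_pos (by omega)).symm⟩
    have hn1 : 1 ≤ n := by omega
    set τ := n + 1 with hτdef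
    have hτcast : (τ : ℝ) = (n : ℝ) + 1 := by rw [hτdef]; push_cast; ring
    have hsplit : ∀ f : ℕ → ℝ, ∑ l ∈ Finset.Icc 1 τ, f l = (∑ l ∈ Finset.Icc 1 n, f l) + f τ :=
      fun f => Finset.sum_Icc_succ_top (by omega) f
    have hnτ : ∀ l ∈ Finset.Icc 1 n, l ≠ τ := by
      intro l hl
      have := Finset.mem_Icc.1 hl
      omega
    have hϑposn : ∀ l ∈ Finset.Icc 1 n, 0 < ϑ l := fun l hl => by
      have := Finset.mem_Icc.1 hl
      exact hϑpos l (Finset.mem_Icc.2 ⟨this.1, by omega⟩)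
    set S : ℝ := ∑ l ∈ Finset.Icc 1 n, 1 / ϑ l with hSdef
    set T : ℝ := ∑ l ∈ Finset.Icc 1 τ, 1 / ϑ l with hTdef
    have hTS : T = S + 1 / ϑ τ := hsplit _
    have hSq : S ≤ q := by
      have : τ - 1 = n := by omega
      rw [hSdef, ← this]
      exact hlow
    have hS1 : 1 < S := by
      have hϑ1 : 0 < ϑ 1 ∧ ϑ 1 < 1 := hϑ 1 (Finset.mem_Icc.2 ⟨le_refl 1, hN⟩)
      have h1 : 1 / ϑ 1 ≤ S := Finset.single_le_sum
        (f := fun l => 1 / ϑ l)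
        (fun l hl => le_of_lt (by have := hϑposn l hl; positivity))
        (Finset.mem_Icc.2 ⟨le_refl 1, hn1⟩)
      have h2 : 1 < 1 / ϑ 1 := by
        rw [lt_div_iff₀ hϑ1.1]; linarith
      linarith
    have hq1 : 1 < q := lt_of_lt_of_le hS1 hSq
    have hqpos : 0 < q := by linarith
    have hqne : q ≠ 0 := ne_of_gt hqpos
    have hϑτpos : 0 < ϑ τ := hϑτ.1
    have hlq : ∀ l ∈ Finset.Icc 1 n, 1 ≤ ϑ l * q := by
      intro l hl
      have hp := hϑposn l hl
      have h1 : 1 / ϑ l ≤ S := Finset.single_le_sum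
        (f := fun j => 1 / ϑ j)
        (fun j hj => le_of_lt (by have := hϑposn j hj; positivity)) hl
      calc 1 = ϑ l * (1 / ϑ l) := by field_simp
        _ ≤ ϑ l * q := mul_le_mul_of_nonneg_left (h1.trans hSq) hp.le
    set α : ℝ := T - q with hαdef
    have hα : 0 < α := sub_pos.2 hhigh
    have hαϑ : ϑ τ * α ≤ 1 := by
      have h1 : α ≤ 1 / ϑ τ := by
        rw [hαdef, hTS]; linarith
      calc ϑ τ * α ≤ ϑ τ * (1 / ϑ τ) := mul_le_mul_of_nonneg_left h1 hϑτpos.le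
        _ = 1 := by field_simp
    set M : ℝ := (τ : ℝ) - ϑ τ * α with hMdef
    have hτR : (2 : ℝ) ≤ (τ : ℝ) := by
      rw [hτcast]
      have : (1:ℝ) ≤ (n:ℝ) := by exact_mod_cast hn1
      linarith
    have hM : 1 ≤ M := by rw [hMdef]; linarith
    have hMpos : 0 < M := by linarith
    set D : ℝ := (τ : ℝ) - 1 - ϑ τ * S with hDdef
    refine ⟨1, one_pos, le_refl 1, fun Δ hΔ0 hΔ1 => ?_⟩
    set ε : ℝ := min (min (α / (2 * S)) (Δ * M / (|D| + 1))) (1 / 2) with hεdef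
    have hSpos : 0 < S := by linarith
    have hε0 : 0 < ε :=
      lt_min (lt_min (by positivity) (by positivity)) (by norm_num)
    have hεhalf : ε ≤ 1 / 2 := min_le_right _ _
    have hε1 : ε < 1 := by linarith
    have hεS : ε * S ≤ α / 2 := by
      have h1 : ε ≤ α / (2 * S) := le_trans (min_le_left _ _) (min_le_left _ _)
      calc ε * S ≤ α / (2 * S) * S := mul_le_mul_of_nonneg_right h1 hSpos.le
        _ = α / 2 := by field_simp
    have hεD : ε * (|D| + 1) ≤ Δ * M := by
      have h1 : ε ≤ Δ * M / (|D| + 1) := le_trans (min_le_left _ _) (min_le_right _ _)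
      have h2 : (0:ℝ) < |D| + 1 := by positivity
      calc ε * (|D| + 1) ≤ Δ * M / (|D| + 1) * (|D| + 1) :=
            mul_le_mul_of_nonneg_right h1 h2.le
        _ = Δ * M := by field_simp
    set x : ℝ := 1 - (1 - ε) * S / q with hxdef
    have hxε : ε ≤ x := by
      rw [hxdef]
      have h1 : (1 - ε) * S / q ≤ 1 - ε := by
        rw [div_le_iff₀ hqpos]
        nlinarith
      linarith
    have hx0 : 0 < x := lt_of_lt_of_le hε0 hxε
    have hx1 : x ≤ 1 := by
      rw [hxdef]
      have h1 : 0 ≤ (1 - ε) * S / q := by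
        have h2 : (0:ℝ) ≤ 1 - ε := by linarith
        positivity
      linarith
    have hxne : x ≠ 0 := ne_of_gt hx0
    have hα' : ϑ τ * α = ϑ τ * S + 1 - ϑ τ * q := by
      rw [hαdef, hTS]
      field_simp
    have hθqx : ϑ τ * q * x = 1 - ϑ τ * α + ε * (ϑ τ * S) := by
      have h1 : ϑ τ * q * x = ϑ τ * q - (1 - ε) * (ϑ τ * S) := by
        rw [hxdef]; field_simp
      rw [h1]
      linear_combination hα'
    refine ⟨fun l => if l = τ then x⁻¹ else ϑ l * q / (1 - ε), ?_, ?_, ?_, ?_, ?_⟩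
    · -- p l ≥ 1
      intro l hl
      beta_reduce
      by_cases hlτ : l = τ
      · rw [if_pos hlτ, show x⁻¹ = 1 / x from (one_div x).symm, le_div_iff₀ hx0, one_mul]
        exact hx1
      · rw [if_neg hlτ]
        have hm := Finset.mem_Icc.1 hl
        have hln : l ∈ Finset.Icc 1 n := Finset.mem_Icc.2 ⟨hm.1, by omega⟩
        rw [le_div_iff₀ (by linarith : (0:ℝ) < 1 - ε), one_mul]
        have := hlq l hln
        linarith
    · -- sum of 1/p = 1
      rw [hsplit]
      beta_reduce
      have h1 : ∀ l ∈ Finset.Icc 1 n,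
          1 / (if l = τ then x⁻¹ else ϑ l * q / (1 - ε)) = (1 - ε) / q * (1 / ϑ l) := by
        intro l hl
        rw [if_neg (hnτ l hl), one_div_div, div_mul_div_comm, mul_one, mul_comm q (ϑ l)]
      rw [Finset.sum_congr rfl h1, ← Finset.mul_sum, ← hSdef, if_pos rfl, one_div, inv_inv,
        hxdef]
      field_simp
      ring
    · -- each factor < 1
      intro l hl
      beta_reduce
      by_cases hlτ : l = τ
      · rw [if_pos hlτ, hlτ, div_eq_mul_inv, inv_inv, hθqx]
        have h1 : ε * (ϑ τ * S) ≤ ϑ τ * (α / 2) := by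
          have h2 := mul_le_mul_of_nonneg_left hεS hϑτpos.le
          nlinarith [h2]
        nlinarith [h1, mul_pos hϑτpos hα]
      · rw [if_neg hlτ]
        have hm := Finset.mem_Icc.1 hl
        have hln : l ∈ Finset.Icc 1 n := Finset.mem_Icc.2 ⟨hm.1, by omega⟩
        have hne : ϑ l * q ≠ 0 := by
          have := hϑposn l hln
          positivity
        rw [div_div_eq_mul_div, mul_comm, mul_div_assoc, div_self hne, mul_one]
        linarith
    · -- the main inequality
      have hB : ∑ l ∈ Finset.Icc 1 τ,
          ϑ l * q / (if l = τ then x⁻¹ else ϑ l * q / (1 - ε)) = (n : ℝ) * (1 - ε) + ϑ τ * q * x := by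
        rw [hsplit]
        beta_reduce
        have h1 : ∀ l ∈ Finset.Icc 1 n,
            ϑ l * q / (if l = τ then x⁻¹ else ϑ l * q / (1 - ε)) = 1 - ε := by
          intro l hl
          rw [if_neg (hnτ l hl)]
          have hne : ϑ l * q ≠ 0 := by
            have := hϑposn l hl
            positivity
          rw [div_div_eq_mul_div, mul_comm, mul_div_assoc, div_self hne, mul_one]
        rw [Finset.sum_congr rfl h1, Finset.sum_const, Nat.card_Icc, if_pos rfl, div_eq_mul_inv, inv_inv]
        simp [nsmul_eq_mul]
      rw [hB]
      have hRHS : ∑ l ∈ Finset.Icc 1 τ, ϑ τ / ϑ l = ϑ τ * T := by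
        rw [hTdef, Finset.mul_sum]
        exact Finset.sum_congr rfl fun l hl => by rw [mul_one_div]
      rw [hRHS]
      have hϑT : ϑ τ * T = ϑ τ * q + ϑ τ * α := by rw [hαdef]; ring
      have hDabs : (0:ℝ) ≤ |D| + D := by
        have := neg_abs_le D
        linarith
      have ht1 : (0:ℝ) ≤ (1 - Δ) * ε * (|D| + D) :=
        mul_nonneg (mul_nonneg (by linarith) hε0.le) hDabs
      have ht2 : (0:ℝ) ≤ Δ * (ε * |D|) :=
        mul_nonneg hΔ0.le (mul_nonneg hε0.le (abs_nonneg D))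
      have hgoal : (1 - Δ) * ((n : ℝ) * (1 - ε) + ϑ τ * q * x) = (1 - Δ) * (M - ε * D) := by
        rw [hθqx, hMdef, hDdef, hτcast]
        ring
      rw [hgoal]
      have hfin : (1 - Δ) * (M - ε * D) ≤ M := by nlinarith
      calc (1 - Δ) * (M - ε * D) ≤ M := hfin
        _ = ϑ τ * q + ↑τ - ϑ τ * T := by rw [hMdef, hϑT]; ring
    · -- κ condition
      intro κ hκ0 hκlt
      refine ⟨τ, hτmem, ?_⟩
      have hτRpos : (0:ℝ) < 2 * (τ : ℝ) := by linarith
      rw [lt_div_iff₀ hτRpos] at hκlt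
      have h2κ : 2 * κ < α / 2 := by nlinarith
      beta_reduce
      rw [if_pos rfl, div_eq_mul_inv, inv_inv]
      have hq' : ϑ τ * (q * x + 2 * κ) = ϑ τ * q * x + ϑ τ * (2 * κ) := by ring
      rw [hq', hθqx]
      have h1 : ε * (ϑ τ * S) ≤ ϑ τ * (α / 2) := by
        have := mul_le_mul_of_nonneg_left hεS hϑτpos.le
        nlinarith
      have h2 : ϑ τ * (2 * κ) < ϑ τ * (α / 2) := mul_lt_mul_of_pos_left h2κ hϑτpos
      nlinarith
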